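/- Let r_1,...,r_n ≥ 1, let A_i ⊆ F be sets of size r_i with elements a_{i,1},...,a_{i,r_i}, let M be the set of monomials dividing X_1^{r_1-1}···X_n^{r_n-1}, and let σ_A map the monomial ∏ X_i^{e_i} to the point (a_{1,e_1+1},...,a_{n,e_n+1}) ∈ ∏ A_i. Then for every down-closed set T ⊆ M of monomials, the set of standard monomials of the vanishing ideal of σ_A(T) equals T (with respect to any degree-compatible monomial order). -/

import Mathlib

open MvPolynomial Finset

namespace Stmt3Aux

variable {F : Type} [Field F] {n : ℕ}

lemma sum_lt_of_le_of_ne {m f : Fin n →₀ ℕ} (h : m ≤ f) (hne : m ≠ f) :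
    (∑ i, m i) < ∑ i, f i := by
  have hle := Finsupp.le_def.mp h
  obtain ⟨i, hi⟩ : ∃ i, m i ≠ f i := by
    by_contra hc
    push_neg at hc
    exact hne (Finsupp.ext hc)
  exact Finset.sum_lt_sum (fun i _ => hle i)
    ⟨i, Finset.mem_univ i, lt_of_le_of_ne (hle i) hi⟩

lemma eq_of_le_of_sum_le {m f : Fin n →₀ ℕ} (h : m ≤ f) (hs : (∑ i, f i) ≤ ∑ i, m i) :
    m = f := by
  by_contra hne
  exact not_le.mpr (sum_lt_of_le_of_ne h hne) hs

set_option maxHeartbeats 1000000 in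
lemma mul_top {p q : MvPolynomial (Fin n) F} {mp mq : Fin n →₀ ℕ}
    (hp : ∀ m ∈ p.support, m ≤ mp) (hq : ∀ m ∈ q.support, m ≤ mq) :
    (∀ m ∈ (p * q).support, m ≤ mp + mq) ∧
      coeff (mp + mq) (p * q) = coeff mp p * coeff mq q := by
  constructor
  · intro m hm
    have hmem := MvPolynomial.support_mul p q hm
    rw [Finset.mem_add] at hmem
    obtain ⟨m1, hm1, m2, hm2, rfl⟩ := hmem
    exact add_le_add (hp m1 hm1) (hq m2 hm2)
  · rw [MvPolynomial.coeff_mul]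
    apply Finset.sum_eq_single (mp, mq)
    · rintro ⟨x1, x2⟩ hx hne
      rw [Finset.HasAntidiagonal.mem_antidiagonal] at hx
      by_cases h1 : coeff x1 p = 0
      · rw [h1, zero_mul]
      by_cases h2 : coeff x2 q = 0
      · rw [h2, mul_zero]
      have hx1 : x1 ≤ mp := hp x1 (MvPolynomial.mem_support_iff.mpr h1)
      have hx2 : x2 ≤ mq := hq x2 (MvPolynomial.mem_support_iff.mpr h2)
      have hx1' : x1 = mp := by
        ext i
        have a1 := Finsupp.le_def.mp hx1 i
        have a2 := Finsupp.le_def.mp hx2 i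
        have a3 : x1 i + x2 i = mp i + mq i := by
          rw [← Finsupp.add_apply, ← Finsupp.add_apply, hx]
        omega
      have hx2' : x2 = mq := by
        ext i
        have a1 := Finsupp.le_def.mp hx1 i
        have a2 := Finsupp.le_def.mp hx2 i
        have a3 : x1 i + x2 i = mp i + mq i := by
          rw [← Finsupp.add_apply, ← Finsupp.add_apply, hx]
        omega
      exact (hne (by rw [hx1', hx2'])).elim
    · intro h
      exact absurd (by rw [Finset.HasAntidiagonal.mem_antidiagonal]) h

lemma prod_top {ι : Type} [DecidableEq ι] (s : Finset ι) (p : ι → MvPolynomial (Fin n) F)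
    (mtop : ι → (Fin n →₀ ℕ))
    (h : ∀ j ∈ s, (∀ m ∈ (p j).support, m ≤ mtop j) ∧ coeff (mtop j) (p j) = 1) :
    (∀ m ∈ (∏ j ∈ s, p j).support, m ≤ ∑ j ∈ s, mtop j) ∧
      coeff (∑ j ∈ s, mtop j) (∏ j ∈ s, p j) = 1 := by
  classical
  induction s using Finset.induction_on with
  | empty =>
    simp only [Finset.prod_empty, Finset.sum_empty]
    constructor
    · intro m hm
      rw [MvPolynomial.mem_support_iff, MvPolynomial.coeff_one] at hm
      by_cases h0 : (0 : Fin n →₀ ℕ) = m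
      · exact h0 ▸ le_rfl
      · simp [h0] at hm
    · rw [MvPolynomial.coeff_one, if_pos rfl]
  | @insert x s hx ih =>
    rw [Finset.prod_insert hx, Finset.sum_insert hx]
    have h1 := h x (Finset.mem_insert_self x s)
    have h2 := ih (fun j hj => h j (Finset.mem_insert_of_mem hj))
    refine ⟨(mul_top h1.1 h2.1).1, ?_⟩
    rw [(mul_top h1.1 h2.1).2, h1.2, h2.2, one_mul]

lemma top_X_sub_C (i : Fin n) (c : F) :
    (∀ m ∈ (X i - C c : MvPolynomial (Fin n) F).support, m ≤ Finsupp.single i 1) ∧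
      coeff (Finsupp.single i 1) (X i - C c : MvPolynomial (Fin n) F) = 1 := by
  have hne : ¬ ((0 : Fin n →₀ ℕ) = Finsupp.single i 1) := by
    intro h
    have := congrArg (fun g => g i) h
    simp at this
  constructor
  · intro m hm
    rw [MvPolynomial.mem_support_iff, MvPolynomial.coeff_sub, MvPolynomial.coeff_X',
        MvPolynomial.coeff_C] at hm
    by_cases h1 : Finsupp.single i 1 = m
    · exact h1 ▸ le_rfl
    · by_cases h0 : (0 : Fin n →₀ ℕ) = m
      · exact h0 ▸ (zero_le : (0 : Fin n →₀ ℕ) ≤ Finsupp.single i 1)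
      · simp [h1, h0] at hm
  · rw [MvPolynomial.coeff_sub, MvPolynomial.coeff_X', MvPolynomial.coeff_C,
      if_pos rfl, if_neg hne, sub_zero]

lemma top_X_pow (i : Fin n) (t : ℕ) :
    (∀ m ∈ ((X i : MvPolynomial (Fin n) F) ^ t).support, m ≤ Finsupp.single i t) ∧
      coeff (Finsupp.single i t) ((X i : MvPolynomial (Fin n) F) ^ t) = 1 := by
  constructor
  · intro m hm
    rw [MvPolynomial.mem_support_iff, MvPolynomial.coeff_X_pow] at hm
    by_cases h : Finsupp.single i t = m
    · exact h ▸ le_rfl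
    · simp [h] at hm
  · rw [MvPolynomial.coeff_X_pow, if_pos rfl]

/-- The basis polynomial in variable `i` of degree `k`. -/
noncomputable def Qi (rr : Fin n → ℕ) (a : Fin n → ℕ → F) (i : Fin n) (k : ℕ) :
    MvPolynomial (Fin n) F :=
  (∏ j ∈ Finset.range (min k (rr i)), (X i - C (a i j))) * (X i) ^ (k - rr i)

lemma Qi_top (rr : Fin n → ℕ) (a : Fin n → ℕ → F) (i : Fin n) (k : ℕ) :
    (∀ m ∈ (Qi rr a i k).support, m ≤ Finsupp.single i k) ∧
      coeff (Finsupp.single i k) (Qi rr a i k) = 1 := by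
  have hprod := prod_top (Finset.range (min k (rr i))) (fun j => X i - C (a i j))
    (fun _ => Finsupp.single i 1) (fun j _ => top_X_sub_C i (a i j))
  have hsum : (∑ _j ∈ Finset.range (min k (rr i)), Finsupp.single i (1 : ℕ))
      = Finsupp.single i (min k (rr i)) := by
    rw [Finset.sum_const, Finset.card_range, Finsupp.smul_single, smul_eq_mul, mul_one]
  rw [hsum] at hprod
  have hpow := top_X_pow (F := F) i (k - rr i)
  have hmt := mul_top hprod.1 hpow.1
  have hsingle : Finsupp.single i (min k (rr i)) + Finsupp.single i (k - rr i)
      = Finsupp.single i k := by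
    rw [← Finsupp.single_add]
    congr 1
    omega
  rw [hsingle] at hmt
  unfold Qi
  exact ⟨hmt.1, by rw [hmt.2, hprod.2, hpow.2, one_mul]⟩

/-- The basis polynomial with top monomial `f`. -/
noncomputable def Qm (rr : Fin n → ℕ) (a : Fin n → ℕ → F) (f : Fin n →₀ ℕ) :
    MvPolynomial (Fin n) F :=
  ∏ i, Qi rr a i (f i)

lemma Qm_top (rr : Fin n → ℕ) (a : Fin n → ℕ → F) (f : Fin n →₀ ℕ) :
    (∀ m ∈ (Qm rr a f).support, m ≤ f) ∧ coeff f (Qm rr a f) = 1 := by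
  have h := prod_top Finset.univ (fun i => Qi rr a i (f i))
    (fun i => Finsupp.single i (f i)) (fun i _ => Qi_top rr a i (f i))
  rw [Finsupp.univ_sum_single f] at h
  unfold Qm
  exact h

lemma eval_Qi (rr : Fin n → ℕ) (a : Fin n → ℕ → F) (i : Fin n) (k : ℕ) (x : Fin n → F) :
    eval x (Qi rr a i k)
      = (∏ j ∈ Finset.range (min k (rr i)), (x i - a i j)) * (x i) ^ (k - rr i) := by
  unfold Qi
  rw [map_mul, map_pow, map_prod]
  simp

lemma eval_Qi_zero (rr : Fin n → ℕ) (a : Fin n → ℕ → F) (i : Fin n) (k : ℕ) (x : Fin n → F)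
    (h : ∃ j, j < min k (rr i) ∧ x i = a i j) :
    eval x (Qi rr a i k) = 0 := by
  obtain ⟨j, hj1, hj2⟩ := h
  rw [eval_Qi]
  apply mul_eq_zero_of_left
  exact Finset.prod_eq_zero (Finset.mem_range.mpr hj1) (by rw [hj2, sub_self])

lemma eval_Qm_zero (rr : Fin n → ℕ) (a : Fin n → ℕ → F) (f : Fin n →₀ ℕ) (x : Fin n → F)
    (h : ∃ i, ∃ j, j < min (f i) (rr i) ∧ x i = a i j) :
    eval x (Qm rr a f) = 0 := by
  obtain ⟨i, hi⟩ := h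
  unfold Qm
  rw [map_prod]
  exact Finset.prod_eq_zero (Finset.mem_univ i) (eval_Qi_zero rr a i (f i) x hi)

lemma eval_Qm_ne_zero (rr : Fin n → ℕ) (a : Fin n → ℕ → F)
    (hinj : ∀ i, Set.InjOn (a i) {j | j < rr i}) (f g : Fin n →₀ ℕ)
    (hg : ∀ i, g i < rr i) (hfg : f ≤ g) :
    eval (fun i => a i (g i)) (Qm rr a f) ≠ 0 := by
  unfold Qm
  rw [map_prod, Finset.prod_ne_zero_iff]
  intro i _
  rw [eval_Qi]
  have hfi : f i ≤ g i := Finsupp.le_def.mp hfg i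
  have hgi := hg i
  have h1 : f i - rr i = 0 := by omega
  have h2 : min (f i) (rr i) = f i := by omega
  rw [h1, h2, pow_zero, mul_one, Finset.prod_ne_zero_iff]
  intro j hj
  rw [Finset.mem_range] at hj
  intro hc
  have heq : a i (g i) = a i j := by
    have := sub_eq_zero.mp hc
    exact this
  have := hinj i (show g i ∈ {j | j < rr i} from hgi)
    (show j ∈ {j | j < rr i} from by simp only [Set.mem_setOf_eq]; omega) heq
  omega

lemma repr (rr : Fin n → ℕ) (a : Fin n → ℕ → F) (p : MvPolynomial (Fin n) F) :
    ∃ (U : Finset (Fin n →₀ ℕ)) (c : (Fin n →₀ ℕ) → F),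
      p = ∑ f ∈ U, C (c f) * Qm rr a f := by
  classical
  suffices H : ∀ d (p : MvPolynomial (Fin n) F), p.totalDegree < d →
      ∃ (U : Finset (Fin n →₀ ℕ)) (c : (Fin n →₀ ℕ) → F),
        p = ∑ f ∈ U, C (c f) * Qm rr a f from
    H (p.totalDegree + 1) p (Nat.lt_succ_self _)
  intro d
  induction d using Nat.strong_induction_on with
  | _ d IH =>
  intro p hp
  by_cases hp0 : p = 0
  · exact ⟨∅, fun _ => 0, by simp [hp0]⟩
  set D := p.totalDegree with hD
  set Tt : Finset (Fin n →₀ ℕ) := p.support.filter (fun m => (∑ i, m i) = D) with hTt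
  set q := p - ∑ f ∈ Tt, C (coeff f p) * Qm rr a f with hq
  have degsum : ∀ m : Fin n →₀ ℕ, (m.sum fun _ e => e) = ∑ i, m i :=
    fun m => Finsupp.sum_fintype m _ (fun _ => rfl)
  have hsupdeg : ∀ m ∈ p.support, (∑ i, m i) ≤ D :=
    fun m hm => (degsum m) ▸ MvPolynomial.le_totalDegree hm
  have key : ∀ m : Fin n →₀ ℕ, D ≤ (∑ i, m i) → coeff m q = 0 := by
    intro m hm
    rw [hq, MvPolynomial.coeff_sub, MvPolynomial.coeff_sum]
    simp only [MvPolynomial.coeff_C_mul]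
    by_cases hmT : m ∈ Tt
    · rw [Finset.sum_eq_single m]
      · rw [(Qm_top rr a m).2, mul_one, sub_self]
      · intro f hf hne
        by_cases h0 : coeff m (Qm rr a f) = 0
        · rw [h0, mul_zero]
        · have hle : m ≤ f := (Qm_top rr a f).1 m (MvPolynomial.mem_support_iff.mpr h0)
          have hfD : (∑ i, f i) = D := (Finset.mem_filter.mp hf).2
          have : m = f := eq_of_le_of_sum_le hle (by rw [hfD]; exact hm)
          exact absurd this.symm hne
      · intro h
        exact absurd hmT h
    · have hpm : coeff m p = 0 := by
        by_contra hc
        have hmem := MvPolynomial.mem_support_iff.mpr hc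
        have : (∑ i, m i) = D := le_antisymm (hsupdeg m hmem) hm
        exact hmT (Finset.mem_filter.mpr ⟨hmem, this⟩)
      rw [hpm, zero_sub, neg_eq_zero]
      apply Finset.sum_eq_zero
      intro f hf
      by_cases h0 : coeff m (Qm rr a f) = 0
      · rw [h0, mul_zero]
      · have hle : m ≤ f := (Qm_top rr a f).1 m (MvPolynomial.mem_support_iff.mpr h0)
        have hfD : (∑ i, f i) = D := (Finset.mem_filter.mp hf).2
        have heq : m = f := eq_of_le_of_sum_le hle (by rw [hfD]; exact hm)
        exact absurd (by rw [heq]; exact hf) hmT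
  by_cases hq0 : q = 0
  · refine ⟨Tt, fun f => coeff f p, ?_⟩
    have h0 : p - ∑ f ∈ Tt, C (coeff f p) * Qm rr a f = 0 := by rw [← hq]; exact hq0
    exact sub_eq_zero.mp h0
  · have hqlt : q.totalDegree < D := by
      by_contra hc
      push_neg at hc
      obtain ⟨m, hm, hmeq⟩ := Finset.exists_mem_eq_sup q.support
        (MvPolynomial.support_nonempty.mpr hq0) (fun m => m.sum fun _ e => e)
      have h0 : coeff m q = 0 := key m (by
        rw [← degsum m]
        calc D ≤ q.totalDegree := hc
        _ = m.sum fun _ e => e := hmeq)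
      exact (MvPolynomial.mem_support_iff.mp hm) h0
    have hDd : D < d := hp
    obtain ⟨U', c', hU'⟩ := IH D hDd q hqlt
    refine ⟨U' ∪ Tt,
      fun f => (if f ∈ U' then c' f else 0) + (if f ∈ Tt then coeff f p else 0), ?_⟩
    have hsplit : ∀ f ∈ U' ∪ Tt,
        C ((if f ∈ U' then c' f else 0) + (if f ∈ Tt then coeff f p else 0)) * Qm rr a f
          = C (if f ∈ U' then c' f else 0) * Qm rr a f
            + C (if f ∈ Tt then coeff f p else 0) * Qm rr a f := by
      intro f _
      rw [map_add, add_mul]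
    rw [Finset.sum_congr rfl hsplit, Finset.sum_add_distrib]
    have h1 : ∑ f ∈ U' ∪ Tt, C (if f ∈ U' then c' f else 0) * Qm rr a f
        = ∑ f ∈ U', C (c' f) * Qm rr a f := by
      rw [← Finset.sum_subset Finset.subset_union_left
        (fun f _ hf => by rw [if_neg hf, map_zero, zero_mul])]
      exact Finset.sum_congr rfl (fun f hf => by rw [if_pos hf])
    have h2 : ∑ f ∈ U' ∪ Tt, C (if f ∈ Tt then coeff f p else 0) * Qm rr a f
        = ∑ f ∈ Tt, C (coeff f p) * Qm rr a f := by
      rw [← Finset.sum_subset Finset.subset_union_right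
        (fun f _ hf => by rw [if_neg hf, map_zero, zero_mul])]
      exact Finset.sum_congr rfl (fun f hf => by rw [if_pos hf])
    rw [h1, h2, ← hU', hq]
    ring

lemma exists_ord_max {ord : (Fin n →₀ ℕ) → (Fin n →₀ ℕ) → Prop}
    (hlin : IsLinearOrder (Fin n →₀ ℕ) ord) (V : Finset (Fin n →₀ ℕ)) :
    V.Nonempty → ∃ f0 ∈ V, ∀ f ∈ V, ord f f0 := by
  haveI := hlin
  classical
  induction V using Finset.induction_on with
  | empty => rintro ⟨x, hx⟩; simp at hx
  | @insert x s hx ih =>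
    intro _
    by_cases hs : s.Nonempty
    · obtain ⟨m, hm, hmax⟩ := ih hs
      rcases total_of ord x m with h | h
      · refine ⟨m, Finset.mem_insert_of_mem hm, ?_⟩
        intro f hf
        rcases Finset.mem_insert.mp hf with rfl | hf
        · exact h
        · exact hmax f hf
      · refine ⟨x, Finset.mem_insert_self x s, ?_⟩
        intro f hf
        rcases Finset.mem_insert.mp hf with rfl | hf
        · exact refl_of ord f
        · exact trans_of ord (hmax f hf) h
    · rw [Finset.not_nonempty_iff_eq_empty] at hs
      subst hs
      refine ⟨x, Finset.mem_insert_self x ∅, ?_⟩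
      intro f hf
      rcases Finset.mem_insert.mp hf with rfl | hf
      · exact refl_of ord f
      · simp at hf

end Stmt3Aux

/-- The vanishing ideal of `S`, as the set of polynomials vanishing on `S`. -/
def vanishSet (F : Type) [Field F] {n : ℕ} (S : Set (Fin n → F)) :
    Set (MvPolynomial (Fin n) F) :=
  {p | ∀ x ∈ S, MvPolynomial.eval x p = 0}

/-- `m` is the leading monomial of `p` with respect to the monomial order `ord`. -/
def IsLeadMon {F : Type} [Field F] {n : ℕ}
    (ord : (Fin n →₀ ℕ) → (Fin n →₀ ℕ) → Prop)
    (p : MvPolynomial (Fin n) F) (m : Fin n →₀ ℕ) : Prop :=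
  m ∈ p.support ∧ ∀ m' ∈ p.support, ord m' m

/-- `m` is a standard monomial of the set of polynomials `I`. -/
def IsStdMon {F : Type} [Field F] {n : ℕ}
    (ord : (Fin n →₀ ℕ) → (Fin n →₀ ℕ) → Prop)
    (I : Set (MvPolynomial (Fin n) F)) (m : Fin n →₀ ℕ) : Prop :=
  ∀ p ∈ I, p ≠ 0 → ¬ IsLeadMon ord p m

open Stmt3Aux in
theorem stmt3 (F : Type) [Field F] (n : ℕ) (rr : Fin n → ℕ) (hr : ∀ i, 1 ≤ rr i)
    (a : Fin n → ℕ → F) (hinj : ∀ i, Set.InjOn (a i) {j | j < rr i})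
    (ord : (Fin n →₀ ℕ) → (Fin n →₀ ℕ) → Prop)
    (hlin : IsLinearOrder (Fin n →₀ ℕ) ord)
    (hmin : ∀ m : Fin n →₀ ℕ, ord 0 m)
    (hadd : ∀ a b c : Fin n →₀ ℕ, ord a b → ord (a + c) (b + c))
    (hdeg : ∀ a b : Fin n →₀ ℕ, (∑ i, a i) < (∑ i, b i) → ord a b)
    (T : Set (Fin n →₀ ℕ))
    (hTM : ∀ e ∈ T, ∀ i, e i < rr i)
    (hdown : ∀ e e' : Fin n →₀ ℕ, e' ≤ e → e ∈ T → e' ∈ T) :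
    {m : Fin n →₀ ℕ |
        IsStdMon ord (vanishSet F ((fun (e : Fin n →₀ ℕ) (i : Fin n) => a i (e i)) '' T)) m}
      = T := by
  classical
  haveI := hlin
  ext e
  simp only [Set.mem_setOf_eq]
  constructor
  · -- standard monomial → in T
    intro hstd
    by_contra heT
    refine hstd (Qm rr a e) ?_ ?_ ?_
    · -- vanishes on the points
      intro x hx
      obtain ⟨g, hgT, rfl⟩ := hx
      apply eval_Qm_zero
      have hne : ¬ e ≤ g := fun hle => heT (hdown g e hle hgT)
      rw [Finsupp.le_def] at hne
      push_neg at hne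
      obtain ⟨i, hi⟩ := hne
      exact ⟨i, g i, lt_min hi (hTM g hgT i), rfl⟩
    · -- nonzero
      intro h0
      have h1 := (Qm_top rr a e).2
      rw [h0, MvPolynomial.coeff_zero] at h1
      exact one_ne_zero h1.symm
    · -- has leading monomial e
      constructor
      · rw [MvPolynomial.mem_support_iff, (Qm_top rr a e).2]
        exact one_ne_zero
      · intro m hm
        have hle := (Qm_top rr a e).1 m hm
        rcases eq_or_ne m e with rfl | hme
        · exact refl_of ord m
        · exact hdeg _ _ (sum_lt_of_le_of_ne hle hme)
  · -- in T → standard monomial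
    intro heT p hpV hp0 hlead
    obtain ⟨U, c, hU⟩ := Stmt3Aux.repr rr a p
    set V := U.filter (fun f => c f ≠ 0) with hV
    have hpV' : p = ∑ f ∈ V, MvPolynomial.C (c f) * Qm rr a f := by
      rw [hU]
      refine (Finset.sum_subset (Finset.filter_subset _ _) ?_).symm
      intro f hf hnf
      have hc0 : c f = 0 := by
        by_contra hc
        exact hnf (Finset.mem_filter.mpr ⟨hf, hc⟩)
      rw [hc0, map_zero, zero_mul]
    have hVne : V.Nonempty := by
      by_contra hc
      rw [Finset.not_nonempty_iff_eq_empty] at hc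
      rw [hc, Finset.sum_empty] at hpV'
      exact hp0 hpV'
    have hcoeff : ∀ m, MvPolynomial.coeff m p
        = ∑ f ∈ V, c f * MvPolynomial.coeff m (Qm rr a f) := by
      intro m
      rw [hpV', MvPolynomial.coeff_sum]
      exact Finset.sum_congr rfl (fun f _ => MvPolynomial.coeff_C_mul _ _ _)
    -- Step 1: all exponents in V are ord-below e
    obtain ⟨f0, hf0V, hf0max⟩ := exists_ord_max hlin V hVne
    have hcf0 : MvPolynomial.coeff f0 p = c f0 := by
      rw [hcoeff f0, Finset.sum_eq_single f0]
      · rw [(Qm_top rr a f0).2, mul_one]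
      · intro f hf hne
        by_cases h0 : MvPolynomial.coeff f0 (Qm rr a f) = 0
        · rw [h0, mul_zero]
        · have hle : f0 ≤ f := (Qm_top rr a f).1 f0 (MvPolynomial.mem_support_iff.mpr h0)
          have h1 : ord f0 f := hdeg _ _ (sum_lt_of_le_of_ne hle (fun h => hne h.symm))
          exact absurd (antisymm_of ord (hf0max f hf) h1) hne
      · intro h
        exact absurd hf0V h
    have hordall : ∀ f ∈ V, ord f e := by
      have hf0e : ord f0 e := by
        apply hlead.2
        rw [MvPolynomial.mem_support_iff, hcf0]
        exact (Finset.mem_filter.mp hf0V).2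
      exact fun f hf => trans_of ord (hf0max f hf) hf0e
    -- Step 2: no exponent in V lies in T
    have hVT : ∀ f ∈ V, f ∉ T := by
      by_contra hc
      push_neg at hc
      obtain ⟨g0, hg0V, hg0T⟩ := hc
      set W := V.filter (fun f => f ∈ T) with hW
      have hWne : W.Nonempty := ⟨g0, Finset.mem_filter.mpr ⟨hg0V, hg0T⟩⟩
      obtain ⟨g, hgW, hgmin'⟩ := Finset.exists_minimal hWne
      have hgmin : ∀ x ∈ W, ¬ x < g := fun x hx hlt => lt_irrefl _ (lt_of_lt_of_le hlt (hgmin' hx hlt.le))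
      have hgV : g ∈ V := (Finset.mem_filter.mp hgW).1
      have hgT : g ∈ T := (Finset.mem_filter.mp hgW).2
      have heval : MvPolynomial.eval (fun i => a i (g i)) p = 0 := hpV _ ⟨g, hgT, rfl⟩
      rw [hpV', map_sum] at heval
      have hterm : ∀ f ∈ V, f ≠ g →
          MvPolynomial.eval (fun i => a i (g i)) (MvPolynomial.C (c f) * Qm rr a f) = 0 := by
        intro f hf hne
        rw [map_mul, MvPolynomial.eval_C]
        apply mul_eq_zero_of_right
        apply eval_Qm_zero
        have hnle : ¬ f ≤ g := by
          intro hle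
          have hfT : f ∈ T := hdown g f hle hgT
          have hfW : f ∈ W := Finset.mem_filter.mpr ⟨hf, hfT⟩
          exact hgmin f hfW (lt_of_le_of_ne hle hne)
        rw [Finsupp.le_def] at hnle
        push_neg at hnle
        obtain ⟨i, hi⟩ := hnle
        exact ⟨i, g i, lt_min hi (hTM g hgT i), rfl⟩
      rw [Finset.sum_eq_single_of_mem g hgV hterm, map_mul, MvPolynomial.eval_C] at heval
      rcases mul_eq_zero.mp heval with h | h
      · exact (Finset.mem_filter.mp hgV).2 h
      · exact eval_Qm_ne_zero rr a hinj g g (hTM g hgT) le_rfl h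
    -- Step 3: the coefficient of e in p must vanish, contradiction
    have he0 : MvPolynomial.coeff e p = 0 := by
      rw [hcoeff e]
      apply Finset.sum_eq_zero
      intro f hf
      by_cases h0 : MvPolynomial.coeff e (Qm rr a f) = 0
      · rw [h0, mul_zero]
      · have hle : e ≤ f := (Qm_top rr a f).1 e (MvPolynomial.mem_support_iff.mpr h0)
        have hne : e ≠ f := by
          rintro rfl
          exact hVT e hf heT
        have h1 : ord e f := hdeg _ _ (sum_lt_of_le_of_ne hle hne)
        exact absurd (antisymm_of ord h1 (hordall f hf)).symm (fun h => hne h.symm)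
    exact (MvPolynomial.mem_support_iff.mp hlead.1) he0
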